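/- Let n ≥ 1, T > 0, M > 0. The heat kernel on ℝⁿ is K(x,t) = (4πt)^{−n/2} exp(−|x|²/(4t)) for t > 0. Let F : ℝⁿ × [0,T] → ℝ be measurable with |F(x,t)| ≤ M for all (x,t), and let G₀ : ℝⁿ → ℝ be measurable and nonnegative-integrable against Gaussians, i.e. (K(·,t)∗|G₀|)(x) < ∞ for every x ∈ ℝⁿ, t ∈ (0,T]. Define the convolution series terms G⁽⁰⁾(x,t) = (K(·,t)∗G₀)(x) and G⁽ᵏ⁺¹⁾(x,t) = ∫₀ᵗ (K(·,t−s)∗(F(·,s)·G⁽ᵏ⁾(·,s)))(x) ds. Then for every fixed (x,t) ∈ ℝⁿ × (0,T] the series Σ_{k≥0} G⁽ᵏ⁾(x,t) converges absolutely, and its sum G satisfies |G(x,t)| ≤ e^{Mt}·(K(·,t)∗|G₀|)(x). -/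

import Mathlib

open MeasureTheory Real

noncomputable section

abbrev E (n : ℕ) := EuclideanSpace ℝ (Fin n)

/-- The heat kernel on ℝⁿ. -/
def heatK (n : ℕ) (x : E n) (t : ℝ) : ℝ :=
  (4 * Real.pi * t) ^ (-(n : ℝ) / 2) * Real.exp (-‖x‖ ^ 2 / (4 * t))

/-- Spatial convolution. -/
def conv (n : ℕ) (f g : E n → ℝ) (x : E n) : ℝ := ∫ y, f (x - y) * g y

/-- The i-th spatial partial derivative. -/
def pd (n : ℕ) (f : E n → ℝ) (i : Fin n) (x : E n) : ℝ :=
  fderiv ℝ f x (EuclideanSpace.single i 1)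

/-- The spatial Laplacian. -/
def lap (n : ℕ) (f : E n → ℝ) (x : E n) : ℝ := ∑ i, pd n (pd n f i) i x
/-- absolute convergence of the convolution series and the fundamental bound
|G(x,t)| <= exp(M t) * (K(.,t) * |G0|)(x), for a potential F bounded by M and initial
data G0 whose Gaussian convolutions are finite. -/
lemma heatK_pos {n : ℕ} {t : ℝ} (ht : 0 < t) (x : E n) : 0 < heatK n x t := by
  have h1 : (0:ℝ) < 4 * Real.pi * t := by positivity
  exact mul_pos (Real.rpow_pos_of_pos h1 _) (Real.exp_pos _)

lemma heatK_cont (n : ℕ) (t : ℝ) : Continuous fun x : E n => heatK n x t := by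
  unfold heatK
  fun_prop

lemma integrable_gauss (n : ℕ) {b : ℝ} (hb : 0 < b) :
    Integrable (fun v : E n => rexp (-b * ‖v‖ ^ 2)) := by
  have h := GaussianFourier.integrable_cexp_neg_mul_sq_norm_add (V := E n)
    (b := (b : ℂ)) (by simpa using hb) 0 0
  simp only [zero_mul, add_zero] at h
  have h2 := h.re
  refine h2.congr (Filter.Eventually.of_forall fun v => ?_)
  show (Complex.exp _).re = _
  rw [show (-(b:ℂ) * (‖v‖:ℂ) ^ 2) = ((-(b * ‖v‖^2) : ℝ) : ℂ) by push_cast; ring,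
    ← Complex.ofReal_exp, Complex.ofReal_re]; ring_nf

lemma integral_gauss (n : ℕ) {b : ℝ} (hb : 0 < b) :
    ∫ v : E n, rexp (-b * ‖v‖ ^ 2) = (Real.pi / b) ^ ((n : ℝ) / 2) := by
  rw [GaussianFourier.integral_rexp_neg_mul_sq_norm hb]
  simp [finrank_euclideanSpace]

open scoped RealInnerProductSpace

lemma heatK_conv_heatK {n : ℕ} {s t : ℝ} (hs : 0 < s) (hst : s < t) (u : E n) :
    Integrable (fun w : E n => heatK n (u - w) (t - s) * heatK n w s) ∧
    ∫ w : E n, heatK n (u - w) (t - s) * heatK n w s = heatK n u t := by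
  have hts : 0 < t - s := sub_pos.mpr hst
  have ht : 0 < t := hs.trans hst
  have hπ : (0:ℝ) < Real.pi := Real.pi_pos
  set A : ℝ := t / (4 * s * (t - s)) with hA
  have hApos : 0 < A := by positivity
  set C : ℝ := (4 * Real.pi * (t-s)) ^ (-(n:ℝ)/2) * (4 * Real.pi * s) ^ (-(n:ℝ)/2)
      * rexp (-‖u‖^2/(4*t)) with hC
  have key : ∀ w : E n, heatK n (u - w) (t - s) * heatK n w s
      = C * rexp (-A * ‖w - (s/t) • u‖^2) := by
    intro w
    have n1 : ‖u - w‖^2 = ‖u‖^2 - 2*⟪u,w⟫ + ‖w‖^2 := norm_sub_sq_real u w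
    have n2 : ‖w - (s/t) • u‖^2 = ‖w‖^2 - 2*((s/t)*⟪u,w⟫) + (s/t)^2*‖u‖^2 := by
      rw [norm_sub_sq_real, real_inner_smul_right, norm_smul, mul_pow, real_inner_comm]
      have : |s / t| = s / t := abs_of_nonneg (by positivity)
      rw [Real.norm_eq_abs, this]
    have eexp : -‖u - w‖^2/(4*(t-s)) + -‖w‖^2/(4*s)
        = -‖u‖^2/(4*t) + -A * ‖w - (s/t) • u‖^2 := by
      rw [n1, n2, hA]
      field_simp
      ring
    unfold heatK
    rw [hC]
    rw [show (4 * Real.pi * (t-s)) ^ (-(n:ℝ)/2) * rexp (-‖u - w‖ ^ 2 / (4 * (t-s))) *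
        ((4 * Real.pi * s) ^ (-(n:ℝ)/2) * rexp (-‖w‖ ^ 2 / (4 * s)))
        = (4 * Real.pi * (t-s)) ^ (-(n:ℝ)/2) * (4 * Real.pi * s) ^ (-(n:ℝ)/2) *
          (rexp (-‖u - w‖ ^ 2 / (4 * (t-s))) * rexp (-‖w‖ ^ 2 / (4 * s))) by ring,
      ← Real.exp_add]
    rw [show (-‖u - w‖ ^ 2 / (4 * (t-s)) + -‖w‖ ^ 2 / (4 * s)) = -‖u - w‖^2/(4*(t-s)) + -‖w‖^2/(4*s) by ring, eexp]
    rw [Real.exp_add]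
    ring
  constructor
  · have hi : Integrable (fun w : E n => rexp (-A * ‖w - (s/t) • u‖^2)) :=
      (integrable_gauss n hApos).comp_sub_right ((s/t) • u)
    exact (hi.const_mul C).congr (Filter.Eventually.of_forall fun w => (key w).symm)
  · have h1 : ∫ w : E n, heatK n (u - w) (t - s) * heatK n w s
        = C * ∫ w : E n, rexp (-A * ‖w - (s/t) • u‖^2) := by
      rw [← MeasureTheory.integral_const_mul]
      exact integral_congr_ae (Filter.Eventually.of_forall key)
    rw [h1, integral_sub_right_eq_self (fun w : E n => rexp (-A * ‖w‖^2)) ((s/t) • u),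
      integral_gauss n hApos, hC]
    unfold heatK
    have hbase : (4 * Real.pi * (t-s))⁻¹ * (4 * Real.pi * s)⁻¹ * (Real.pi / A) = (4 * Real.pi * t)⁻¹ := by
      rw [hA]; field_simp
    have : (4 * Real.pi * (t-s)) ^ (-(n:ℝ)/2) * (4 * Real.pi * s) ^ (-(n:ℝ)/2)
        * (Real.pi / A) ^ ((n:ℝ)/2) = (4 * Real.pi * t) ^ (-(n:ℝ)/2) := by
      rw [neg_div, Real.rpow_neg (by positivity), Real.rpow_neg (by positivity),
        Real.rpow_neg (by positivity), ← Real.inv_rpow (by positivity),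
        ← Real.inv_rpow (by positivity), ← Real.inv_rpow (by positivity),
        ← Real.mul_rpow (by positivity) (by positivity),
        ← Real.mul_rpow (by positivity) (by positivity), hbase]
    rw [← this]
    ring

lemma conv_semigroup {n : ℕ} {T : ℝ} (G₀ : E n → ℝ) (hG₀m : Measurable G₀)
    (hG₀int : ∀ (x : E n), ∀ t ∈ Set.Ioc 0 T,
      Integrable (fun y => heatK n (x - y) t * |G₀ y|))
    {s t : ℝ} (hT : t ≤ T) (hs : 0 < s) (hst : s < t) (x : E n) :
    Integrable (fun y : E n => heatK n (x - y) (t - s) * ∫ z, heatK n (y - z) s * |G₀ z|) ∧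
    ∫ y : E n, heatK n (x - y) (t - s) * ∫ z, heatK n (y - z) s * |G₀ z|
      = ∫ z, heatK n (x - z) t * |G₀ z| := by
  have ht : 0 < t := hs.trans hst
  have hts : 0 < t - s := sub_pos.mpr hst
  have hsT : s ∈ Set.Ioc (0:ℝ) T := ⟨hs, hst.le.trans hT⟩
  have htT : t ∈ Set.Ioc (0:ℝ) T := ⟨ht, hT⟩
  set g : E n → ℝ := fun z => |G₀ z| with hg
  have hgm : Measurable g := hG₀m.abs
  have hgnn : ∀ z, 0 ≤ g z := fun z => abs_nonneg _
  set H : E n → ℝ := fun y => ∫ z, heatK n (y - z) s * g z with hH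
  have hHnn : ∀ y, 0 ≤ H y :=
    fun y => integral_nonneg fun z => mul_nonneg (heatK_pos hs _).le (hgnn z)
  have hKm : ∀ τ : ℝ, Measurable fun p : E n × E n => heatK n (p.1 - p.2) τ := fun τ =>
    ((heatK_cont n τ).comp (continuous_fst.sub continuous_snd)).measurable
  have hHm : StronglyMeasurable H := by
    have : StronglyMeasurable fun p : E n × E n => heatK n (p.1 - p.2) s * g p.2 :=
      ((hKm s).mul (hgm.comp measurable_snd)).stronglyMeasurable
    exact this.integral_prod_right'
  have hfm : Measurable fun y : E n => heatK n (x - y) (t - s) * H y :=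
    (((heatK_cont n (t-s)).comp (continuous_const.sub continuous_id)).measurable).mul
      hHm.measurable
  have hfnn : ∀ y : E n, 0 ≤ heatK n (x - y) (t - s) * H y :=
    fun y => mul_nonneg (heatK_pos hts _).le (hHnn y)
  have hof : ∀ y : E n, ENNReal.ofReal (H y)
      = ∫⁻ z, ENNReal.ofReal (heatK n (y - z) s * g z) := fun y =>
    MeasureTheory.ofReal_integral_eq_lintegral_ofReal (hG₀int y s hsT)
      (Filter.Eventually.of_forall fun z => mul_nonneg (heatK_pos hs _).le (hgnn z))
  have L : ∫⁻ y : E n, ENNReal.ofReal (heatK n (x - y) (t - s) * H y)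
      = ENNReal.ofReal (∫ z, heatK n (x - z) t * g z) := by
    have step1 : ∫⁻ y : E n, ENNReal.ofReal (heatK n (x - y) (t - s) * H y)
        = ∫⁻ y : E n, ∫⁻ z : E n, ENNReal.ofReal (heatK n (x - y) (t - s))
            * ENNReal.ofReal (heatK n (y - z) s * g z) := by
      refine lintegral_congr fun y => ?_
      rw [ENNReal.ofReal_mul (heatK_pos hts _).le, hof y,
        lintegral_const_mul' _ _ ENNReal.ofReal_ne_top]
    rw [step1]
    rw [lintegral_lintegral_swap]
    · have inner : ∀ z : E n, ∫⁻ y : E n, ENNReal.ofReal (heatK n (x - y) (t - s))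
          * ENNReal.ofReal (heatK n (y - z) s * g z)
          = ENNReal.ofReal (heatK n (x - z) t * g z) := by
        intro z
        have e1 : ∀ y : E n, ENNReal.ofReal (heatK n (x - y) (t - s))
            * ENNReal.ofReal (heatK n (y - z) s * g z)
            = ENNReal.ofReal (heatK n (x - y) (t - s) * heatK n (y - z) s)
              * ENNReal.ofReal (g z) := by
          intro y
          rw [ENNReal.ofReal_mul (heatK_pos hs _).le,
            ENNReal.ofReal_mul (heatK_pos hts _).le, mul_assoc]
        simp_rw [e1]
        rw [lintegral_mul_const' _ _ ENNReal.ofReal_ne_top]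
        have sub : ∫⁻ y : E n, ENNReal.ofReal (heatK n (x - y) (t - s) * heatK n (y - z) s)
            = ∫⁻ y : E n, ENNReal.ofReal (heatK n ((x - z) - y) (t - s) * heatK n y s) := by
          rw [← lintegral_add_right_eq_self
            (fun y : E n => ENNReal.ofReal (heatK n (x - y) (t - s) * heatK n (y - z) s)) z]
          refine lintegral_congr fun y => ?_
          congr 2
          · congr 1; abel
          · congr 1; abel
        rw [sub, ← MeasureTheory.ofReal_integral_eq_lintegral_ofReal
            (heatK_conv_heatK hs hst (x - z)).1
            (Filter.Eventually.of_forall fun y =>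
              mul_nonneg (heatK_pos hts _).le (heatK_pos hs _).le),
          (heatK_conv_heatK hs hst (x - z)).2,
          ← ENNReal.ofReal_mul (heatK_pos ht _).le]
      simp_rw [inner]
      exact (MeasureTheory.ofReal_integral_eq_lintegral_ofReal (hG₀int x t htT)
        (Filter.Eventually.of_forall fun z =>
          mul_nonneg (heatK_pos ht _).le (hgnn z))).symm
    · exact (Measurable.mul
        ((ENNReal.measurable_ofReal.comp
          (((heatK_cont n (t-s)).comp (continuous_const.sub continuous_fst)).measurable)))
        ((ENNReal.measurable_ofReal.comp
          (((hKm s).mul (hgm.comp measurable_snd)))))).aemeasurable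
  have hint : Integrable (fun y : E n => heatK n (x - y) (t - s) * H y) := by
    refine ⟨hfm.aestronglyMeasurable, ?_⟩
    rw [MeasureTheory.hasFiniteIntegral_iff_ofReal
      (Filter.Eventually.of_forall hfnn), L]
    exact ENNReal.ofReal_lt_top
  refine ⟨hint, ?_⟩
  rw [MeasureTheory.integral_eq_lintegral_of_nonneg_ae
    (Filter.Eventually.of_forall hfnn) hfm.aestronglyMeasurable, L, ENNReal.toReal_ofReal]
  exact integral_nonneg fun z => mul_nonneg (heatK_pos ht _).le (hgnn z)

theorem stmt5 (n : ℕ) (hn : 1 ≤ n) (T M : ℝ) (hT : 0 < T) (hM : 0 < M)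
    (F : E n → ℝ → ℝ) (hFm : Measurable fun q : E n × ℝ => F q.1 q.2)
    (hFb : ∀ (x : E n), ∀ t ∈ Set.Icc 0 T, |F x t| ≤ M)
    (G₀ : E n → ℝ) (hG₀m : Measurable G₀)
    (hG₀int : ∀ (x : E n), ∀ t ∈ Set.Ioc 0 T,
      MeasureTheory.Integrable (fun y => heatK n (x - y) t * |G₀ y|))
    (Gk : ℕ → E n → ℝ → ℝ)
    (hGk0 : ∀ x t, Gk 0 x t = conv n (fun y => heatK n y t) G₀ x)
    (hGkS : ∀ k x t, Gk (k + 1) x t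
      = ∫ s in (0:ℝ)..t, conv n (fun y => heatK n y (t - s)) (fun y => F y s * Gk k y s) x) :
    ∀ (x : E n), ∀ t ∈ Set.Ioc 0 T,
      Summable (fun k => |Gk k x t|) ∧
      |∑' k, Gk k x t|
        ≤ Real.exp (M * t) * conv n (fun y => heatK n y t) (fun y => |G₀ y|) x := by
  set Hf : ℝ → E n → ℝ := fun t x => ∫ y, heatK n (x - y) t * |G₀ y| with hHf
  have key : ∀ k, ∀ x : E n, ∀ t ∈ Set.Ioc (0:ℝ) T,
      |Gk k x t| ≤ (M*t)^k / (Nat.factorial k) * Hf t x := by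
    intro k
    induction k with
    | zero =>
      rintro x t ⟨ht, htT⟩
      rw [hGk0]
      simp only [pow_zero, Nat.factorial_zero, Nat.cast_one, div_one, one_mul]
      have h1 : |conv n (fun y => heatK n y t) G₀ x|
          ≤ ∫ y, ‖heatK n (x - y) t * G₀ y‖ := by
        unfold conv
        rw [← Real.norm_eq_abs]
        exact MeasureTheory.norm_integral_le_integral_norm _
      refine h1.trans (le_of_eq ?_)
      refine integral_congr_ae (Filter.Eventually.of_forall fun y => ?_)
      show ‖heatK n (x - y) t * G₀ y‖ = heatK n (x - y) t * |G₀ y|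
      rw [Real.norm_eq_abs, abs_mul, abs_of_pos (heatK_pos ht _)]
    | succ k ih =>
      rintro x t ⟨ht, htT⟩
      rw [hGkS]
      have step : ∀ s ∈ Set.Ioo (0:ℝ) t,
          ‖conv n (fun y => heatK n y (t - s)) (fun y => F y s * Gk k y s) x‖
          ≤ M^(k+1) * s^k / (Nat.factorial k) * Hf t x := by
        rintro s ⟨hs, hst⟩
        have hts : 0 < t - s := sub_pos.mpr hst
        have hsg := conv_semigroup (T := T) G₀ hG₀m hG₀int htT hs hst x
        set c : ℝ := M * ((M*s)^k / (Nat.factorial k)) with hc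
        have hcnn : 0 ≤ c := by
          have : 0 ≤ (M*s)^k := pow_nonneg (by positivity) k
          positivity
        have h1 : ‖conv n (fun y => heatK n y (t - s)) (fun y => F y s * Gk k y s) x‖
            ≤ ∫ y, ‖heatK n (x - y) (t - s) * (F y s * Gk k y s)‖ := by
          unfold conv
          exact MeasureTheory.norm_integral_le_integral_norm _
        have h2 : ∫ y, ‖heatK n (x - y) (t - s) * (F y s * Gk k y s)‖
            ≤ ∫ y, heatK n (x - y) (t - s) * (c * Hf s y) := by
          refine MeasureTheory.integral_mono_of_nonneg
            (Filter.Eventually.of_forall fun y => norm_nonneg _)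
            (by
              have := hsg.1
              refine (this.const_mul c).congr (Filter.Eventually.of_forall fun y => ?_)
              show c * (heatK n (x - y) (t - s) * Hf s y) = _
              ring)
            (Filter.Eventually.of_forall fun y => ?_)
          show ‖heatK n (x - y) (t - s) * (F y s * Gk k y s)‖
            ≤ heatK n (x - y) (t - s) * (c * Hf s y)
          rw [Real.norm_eq_abs, abs_mul, abs_of_pos (heatK_pos hts _), abs_mul]
          have hF : |F y s| ≤ M := hFb y s ⟨hs.le, (hst.le.trans htT)⟩
          have hG : |Gk k y s| ≤ (M*s)^k / (Nat.factorial k) * Hf s y :=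
            ih y s ⟨hs, hst.le.trans htT⟩
          have : |F y s| * |Gk k y s| ≤ M * ((M*s)^k / (Nat.factorial k) * Hf s y) :=
            mul_le_mul hF hG (abs_nonneg _) hM.le
          calc heatK n (x - y) (t - s) * (|F y s| * |Gk k y s|)
              ≤ heatK n (x - y) (t - s) * (M * ((M*s)^k / (Nat.factorial k) * Hf s y)) :=
                mul_le_mul_of_nonneg_left this (heatK_pos hts _).le
            _ = heatK n (x - y) (t - s) * (c * Hf s y) := by rw [hc]; ring
        have h3 : ∫ y, heatK n (x - y) (t - s) * (c * Hf s y) = c * Hf t x := by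
          rw [show (fun y => heatK n (x - y) (t - s) * (c * Hf s y))
              = fun y => c * (heatK n (x - y) (t - s) * Hf s y) by funext y; ring]
          rw [MeasureTheory.integral_const_mul, hsg.2]
        have h4 : c * Hf t x = M^(k+1) * s^k / (Nat.factorial k) * Hf t x := by
          rw [hc, mul_pow]; ring
        calc ‖conv n (fun y => heatK n y (t - s)) (fun y => F y s * Gk k y s) x‖
            ≤ ∫ y, heatK n (x - y) (t - s) * (c * Hf s y) := h1.trans h2
          _ = c * Hf t x := h3
          _ = _ := h4
      -- now the interval integral
      have hInt : |∫ s in (0:ℝ)..t,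
            conv n (fun y => heatK n y (t - s)) (fun y => F y s * Gk k y s) x|
          ≤ ∫ s in Set.Ioo (0:ℝ) t,
            ‖conv n (fun y => heatK n y (t - s)) (fun y => F y s * Gk k y s) x‖ := by
        rw [← Real.norm_eq_abs]
        refine (intervalIntegral.norm_integral_le_integral_norm ht.le).trans (le_of_eq ?_)
        rw [intervalIntegral.integral_of_le ht.le, MeasureTheory.integral_Ioc_eq_integral_Ioo]
      have hmaj : ∫ s in Set.Ioo (0:ℝ) t,
            ‖conv n (fun y => heatK n y (t - s)) (fun y => F y s * Gk k y s) x‖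
          ≤ ∫ s in Set.Ioo (0:ℝ) t, M^(k+1) * s^k / (Nat.factorial k) * Hf t x := by
        refine MeasureTheory.integral_mono_of_nonneg
          (Filter.Eventually.of_forall fun s => norm_nonneg _) ?_ ?_
        · have : Continuous fun s : ℝ => M^(k+1) * s^k / (Nat.factorial k) * Hf t x := by
            continuity
          exact (this.integrableOn_Ioc).mono_set Set.Ioo_subset_Ioc_self
        · filter_upwards [MeasureTheory.ae_restrict_mem measurableSet_Ioo] with s hs
            using step s hs
      have hval : ∫ s in Set.Ioo (0:ℝ) t, M^(k+1) * s^k / (Nat.factorial k) * Hf t x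
          = (M*t)^(k+1) / (Nat.factorial (k+1)) * Hf t x := by
        have : (fun s : ℝ => M^(k+1) * s^k / (Nat.factorial k) * Hf t x)
            = fun s : ℝ => (M^(k+1) / (Nat.factorial k) * Hf t x) * s^k := by
          funext s; ring
        rw [this, MeasureTheory.integral_const_mul,
          ← MeasureTheory.integral_Ioc_eq_integral_Ioo,
          ← intervalIntegral.integral_of_le ht.le, integral_pow]
        have hfac : (Nat.factorial (k+1) : ℝ) = (k+1) * Nat.factorial k := by
          rw [Nat.factorial_succ]; push_cast; ring
        rw [mul_pow, hfac]
        have hk : ((k:ℝ)+1) ≠ 0 := by positivity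
        have hkf : (Nat.factorial k : ℝ) ≠ 0 := Nat.cast_ne_zero.mpr (Nat.factorial_ne_zero k)
        field_simp
        ring
      calc |∫ s in (0:ℝ)..t,
            conv n (fun y => heatK n y (t - s)) (fun y => F y s * Gk k y s) x|
          ≤ ∫ s in Set.Ioo (0:ℝ) t, M^(k+1) * s^k / (Nat.factorial k) * Hf t x :=
            hInt.trans hmaj
        _ = (M*t)^(k+1) / (Nat.factorial (k+1)) * Hf t x := hval
  -- conclusion
  rintro x t ⟨ht, htT⟩
  have hb : ∀ kk, |Gk kk x t| ≤ (M*t)^kk / (Nat.factorial kk) * Hf t x :=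
    fun kk => key kk x t ⟨ht, htT⟩
  have hsum : Summable (fun kk : ℕ => (M*t)^kk / (Nat.factorial kk) * Hf t x) :=
    (Real.summable_pow_div_factorial (M*t)).mul_right _
  have h1 : Summable fun kk => |Gk kk x t| :=
    Summable.of_nonneg_of_le (fun kk => abs_nonneg _) hb hsum
  refine ⟨h1, ?_⟩
  have hconv : conv n (fun y => heatK n y t) (fun y => |G₀ y|) x = Hf t x := rfl
  have h2 : |∑' kk, Gk kk x t| ≤ ∑' kk, |Gk kk x t| := by
    rw [← Real.norm_eq_abs]
    refine (norm_tsum_le_tsum_norm ?_)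
    simpa [Real.norm_eq_abs] using h1
  have h3 : ∑' kk, |Gk kk x t| ≤ ∑' kk, (M*t)^kk / (Nat.factorial kk) * Hf t x :=
    Summable.tsum_le_tsum hb h1 hsum
  have h4 : ∑' kk : ℕ, (M*t)^kk / (Nat.factorial kk) * Hf t x
      = Real.exp (M*t) * Hf t x := by
    rw [tsum_mul_right]
    congr 1
    rw [Real.exp_eq_exp_ℝ, NormedSpace.exp_eq_tsum_div]
  rw [hconv]
  calc |∑' kk, Gk kk x t| ≤ ∑' kk, |Gk kk x t| := h2
    _ ≤ ∑' kk : ℕ, (M*t)^kk / (Nat.factorial kk) * Hf t x := h3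
    _ = Real.exp (M*t) * Hf t x := h4
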